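/- Let W be a basic localizer on Cat. Then the image of W in Cat has a left calculus of fractions up to natural isomorphism; in particular, for any f: Y → Z in W and g: Y → X arbitrary, there exist a small category P, functors F: X → P with F ∈ W and G: Z → P, together with a zig-zag of natural transformations connecting F∘g and G∘f (so that F∘g = G∘f in the category obtained from Cat by identifying naturally-transformation-connected functors). -/

import Mathlib

open CategoryTheory CategoryTheory.Limits

universe u

/-- A class of morphisms is weakly saturated if it contains identities,
satisfies 2-out-of-3, and satisfies (WS3). -/
structure IsWeaklySaturated {C : Type*} [Category C] (W : MorphismProperty C) : Prop where
  id_mem : ∀ X : C, W (𝟙 X)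
  comp_mem : ∀ ⦃X Y Z : C⦄ (f : X ⟶ Y) (g : Y ⟶ Z), W f → W g → W (f ≫ g)
  of_comp_left : ∀ ⦃X Y Z : C⦄ (f : X ⟶ Y) (g : Y ⟶ Z), W f → W (f ≫ g) → W g
  of_comp_right : ∀ ⦃X Y Z : C⦄ (f : X ⟶ Y) (g : Y ⟶ Z), W g → W (f ≫ g) → W f
  ws3 : ∀ ⦃X Y : C⦄ (p : Y ⟶ X) (s : X ⟶ Y), s ≫ p = 𝟙 X → W (p ≫ s) → W p

/-- The terminal category, as an object of `Cat`. -/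
abbrev Cat.pt : Cat.{u, u} := Cat.of (Discrete PUnit.{u + 1})

/-- A basic localizer (Grothendieck's « localisateur fondamental ») on `Cat`:
(L1) weak saturation, (L2) categories with a terminal object are aspherical,
(L3) locality over a base via comma categories. -/
structure IsBasicLocalizer (W : MorphismProperty Cat.{u, u}) : Prop where
  weaklySaturated : IsWeaklySaturated W
  terminal : ∀ (I : Cat.{u, u}) [HasTerminal I],
    W (X := I) (Y := Cat.pt.{u}) (Functor.star I).toCatHom
  locality : ∀ ⦃I J K : Cat.{u, u}⦄ (w : I ⟶ J) (v : J ⟶ K),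
    (∀ k : K,
      W (X := Cat.of (Comma (w.toFunctor ⋙ v.toFunctor) (Functor.fromPUnit.{u} k)))
        (Y := Cat.of (Comma v.toFunctor (Functor.fromPUnit.{u} k)))
        (Comma.preLeft w.toFunctor v.toFunctor (Functor.fromPUnit.{u} k)).toCatHom) →
    W w

/-- Two parallel functors are "naturally connected" if they are related by a zig-zag
of natural transformations. -/
def NatConnected {I J : Cat.{u, u}} (a b : I ⟶ J) : Prop :=
  Relation.EqvGen (fun p q : ↥I ⥤ ↥J => Nonempty (p ⟶ q)) a.toFunctor b.toFunctor

namespace LocalizerAux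

open CategoryTheory CategoryTheory.Limits

instance subsingletonPreorderHom {α : Type*} [Preorder α] {a b : α} :
    Subsingleton (a ⟶ b) :=
  ⟨fun ⟨⟨_⟩⟩ ⟨⟨_⟩⟩ => rfl⟩

instance : Subsingleton (Discrete PUnit.{u + 1}) :=
  ⟨fun ⟨⟨⟩⟩ ⟨⟨⟩⟩ => rfl⟩

instance subsingletonDiscretePUnitHom {a b : Discrete PUnit.{u + 1}} :
    Subsingleton (a ⟶ b) :=
  ⟨fun ⟨⟨_⟩⟩ ⟨⟨_⟩⟩ => rfl⟩

theorem toPt_unique {C : Type*} [Category C] (F G : C ⥤ Discrete PUnit.{u + 1}) : F = G :=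
  CategoryTheory.Functor.ext (fun _ => Subsingleton.elim _ _)
    (fun _ _ _ => Subsingleton.elim _ _)

variable {W : MorphismProperty Cat.{u, u}}

@[simp] theorem eqToHom_self_comp {C : Type*} [Category C] {a b : C} (h : a = a) (φ : a ⟶ b) :
    eqToHom h ≫ φ = φ := by simp

/-- The canonical functor to the point, as a morphism in `Cat`. -/
def starHom (A : Cat.{u, u}) : A ⟶ Cat.pt.{u} := (Functor.star ↥A).toCatHom

theorem aspherical_map (hW : IsBasicLocalizer W) {A B : Cat.{u, u}} (u : A ⟶ B)
    (hA : W (starHom A)) (hB : W (starHom B)) : W u := by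
  refine hW.weaklySaturated.of_comp_right u (starHom B) hB ?_
  have h : u ≫ starHom B = starHom A := Cat.ext (toPt_unique (C := ↥A) _ _)
  rw [h]; exact hA

/-- terminal object of a comma category from an adjunction -/
def commaTerminalOfAdj {A B : Type u} [Category.{u} A] [Category.{u} B]
    {l : A ⥤ B} {r : B ⥤ A} (adj : l ⊣ r) (b : B) :
    IsTerminal (⟨r.obj b, ⟨⟨⟩⟩, adj.counit.app b⟩ : Comma l (Functor.fromPUnit.{u} b)) :=
  IsTerminal.ofUniqueHom
    (fun c => { left := (adj.homEquiv _ _) c.hom, right := eqToHom (Subsingleton.elim _ _),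
                w := by simp [Adjunction.homEquiv_unit] })
    (fun c m => by
      apply CommaMorphism.ext
      · apply (adj.homEquiv _ _).symm.injective
        have := m.w
        simp only [Functor.const_obj_map, Category.comp_id] at this
        simpa [Adjunction.homEquiv_counit] using this
      · exact Subsingleton.elim _ _)

theorem W_of_comma_aspherical (hW : IsBasicLocalizer W) {A B : Cat.{u, u}} (w : A ⟶ B)
    (h : ∀ b : ↥B,
      W (starHom (Cat.of (Comma w.toFunctor (Functor.fromPUnit.{u} b))))) : W w := by
  refine hW.locality w (𝟙 B) (fun k => ?_)
  refine aspherical_map hW _ ?_ ?_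
  · exact h k
  · haveI : HasTerminal ↥(Cat.of (Comma (𝟙 B : B ⟶ B).toFunctor (Functor.fromPUnit.{u} k))) :=
      (commaTerminalOfAdj (Adjunction.id (C := ↥B)) k).hasTerminal
    exact hW.terminal _

theorem W_of_leftAdjoint (hW : IsBasicLocalizer W) {A B : Cat.{u, u}}
    {l : ↥A ⥤ ↥B} {r : ↥B ⥤ ↥A} (adj : l ⊣ r) :
    W (X := A) (Y := B) l.toCatHom := by
  refine W_of_comma_aspherical hW l.toCatHom (fun b => ?_)
  haveI : HasTerminal ↥(Cat.of (Comma l.toCatHom.toFunctor (Functor.fromPUnit.{u} b))) :=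
    (commaTerminalOfAdj adj b).hasTerminal
  exact hW.terminal _

/-! ### The cylinder and homotopy invariance -/

/-- The walking arrow, as a `Type u` preorder. -/
abbrev Two : Type u := ULift.{u} Bool

theorem Two.not_le : ¬ ((⟨true⟩ : Two.{u}) ≤ ⟨false⟩) := fun h =>
  (by decide : ¬ ((true : Bool) ≤ false)) h

variable {I J : Cat.{u, u}}

/-- The cylinder on a small category. -/
noncomputable def cylCat (I : Cat.{u, u}) : Cat.{u, u} := Cat.of (↥I × Two.{u})

/-- The homotopy associated to a natural transformation. -/
noncomputable def cylHomotopy {a b : ↥I ⥤ ↥J} (α : a ⟶ b) : (↥I × Two.{u}) ⥤ ↥J where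
  obj p := cond p.2.down (b.obj p.1) (a.obj p.1)
  map {p q} φ :=
    match p, q, φ with
    | (_, ⟨false⟩), (_, ⟨false⟩), φ => a.map φ.1
    | (_, ⟨false⟩), (i', ⟨true⟩), φ => a.map φ.1 ≫ α.app i'
    | (_, ⟨true⟩), (_, ⟨true⟩), φ => b.map φ.1
    | (_, ⟨true⟩), (_, ⟨false⟩), φ => (Two.not_le.{u} φ.2.down.down).elim
  map_id p := by
    rcases p with ⟨i, ⟨_ | _⟩⟩ <;> simp
  map_comp {p q r} φ ψ := by
    rcases p with ⟨p1, ⟨_ | _⟩⟩ <;> rcases q with ⟨q1, ⟨_ | _⟩⟩ <;>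
      rcases r with ⟨r1, ⟨_ | _⟩⟩ <;>
      first
        | exact (Two.not_le.{u} φ.2.down.down).elim
        | exact (Two.not_le.{u} ψ.2.down.down).elim
        | simp

/-- Inclusion at an endpoint of the cylinder. -/
noncomputable def cylEmb (t : Two.{u}) : ↥I ⥤ ↥I × Two.{u} where
  obj i := (i, t)
  map φ := (φ, homOfLE (le_refl t))
  map_id _ := rfl
  map_comp _ _ := Prod.ext rfl (Subsingleton.elim _ _)

/-- Projection of the cylinder. -/
noncomputable def cylProj : (↥I × Two.{u}) ⥤ ↥I where
  obj p := p.1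
  map φ := φ.1

/-- The endpoint inclusions and projection, as morphisms in `Cat`. -/
noncomputable def cylEmbHom (I : Cat.{u, u}) (t : Two.{u}) : I ⟶ cylCat I := (cylEmb t).toCatHom

noncomputable def cylProjHom (I : Cat.{u, u}) : cylCat I ⟶ I := cylProj.toCatHom

noncomputable def cylHomotopyHom {a b : I ⟶ J} (α : a.toFunctor ⟶ b.toFunctor) : cylCat I ⟶ J :=
  (cylHomotopy α).toCatHom

/-- The bottom inclusion is left adjoint to the projection. -/
noncomputable def cylAdj : (cylEmb (I := I) ⟨false⟩) ⊣ cylProj :=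
  Adjunction.mkOfHomEquiv
    { homEquiv := fun i p =>
        { toFun := fun φ => φ.1
          invFun := fun ψ => (ψ, homOfLE (by exact Bool.false_le _))
          left_inv := fun φ => Prod.ext rfl (Subsingleton.elim _ _)
          right_inv := fun ψ => rfl }
      homEquiv_naturality_left_symm := fun φ ψ => Prod.ext rfl (Subsingleton.elim _ _)
      homEquiv_naturality_right := fun φ ψ => rfl }

theorem W_natTrans (hW : IsBasicLocalizer W) {a b : I ⟶ J}
    (α : a.toFunctor ⟶ b.toFunctor) : W a ↔ W b := by
  have hproj : W (cylProjHom I) := by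
    have h0 : W (cylEmbHom I ⟨false⟩) := W_of_leftAdjoint hW cylAdj
    have hcomp : cylEmbHom I ⟨false⟩ ≫ cylProjHom I = 𝟙 I := rfl
    exact hW.weaklySaturated.of_comp_left _ _ h0
      (by rw [hcomp]; exact hW.weaklySaturated.id_mem I)
  have hW1 : ∀ t : Two.{u}, W (cylEmbHom I t) := fun t =>
    hW.weaklySaturated.of_comp_right (cylEmbHom I t) (cylProjHom I) hproj
      (by
        have : cylEmbHom I t ≫ cylProjHom I = 𝟙 I := rfl
        rw [this]; exact hW.weaklySaturated.id_mem I)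
  have hH0 : cylEmbHom I ⟨false⟩ ≫ cylHomotopyHom α = a := rfl
  have hH1 : cylEmbHom I ⟨true⟩ ≫ cylHomotopyHom α = b := rfl
  constructor
  · intro ha
    have hH : W (cylHomotopyHom α) :=
      hW.weaklySaturated.of_comp_left (cylEmbHom I ⟨false⟩) _ (hW1 _)
        (by rw [hH0]; exact ha)
    rw [← hH1]
    exact hW.weaklySaturated.comp_mem _ _ (hW1 _) hH
  · intro hb
    have hH : W (cylHomotopyHom α) :=
      hW.weaklySaturated.of_comp_left (cylEmbHom I ⟨true⟩) _ (hW1 _)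
        (by rw [hH1]; exact hb)
    rw [← hH0]
    exact hW.weaklySaturated.comp_mem _ _ (hW1 _) hH

theorem W_of_isEquivalence (hW : IsBasicLocalizer W) {A B : Cat.{u, u}}
    (F : ↥A ⥤ ↥B) [F.IsEquivalence] : W (X := A) (Y := B) F.toCatHom :=
  W_of_leftAdjoint hW F.asEquivalence.toAdjunction

/-! ### The span shape -/

/-- The shape of a span `y → x`, `y → z`. -/
inductive Sp : Type u
  | x | y | z

instance : Preorder Sp.{u} where
  le a b := a = b ∨ a = Sp.y
  le_refl a := Or.inl rfl
  le_trans a b c h₁ h₂ := h₁.elim (fun e => e ▸ h₂) fun e => Or.inr e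

theorem Sp.notLE {a b : Sp.{u}} (hab : a ≤ b) (h₁ : a ≠ b) (h₂ : a ≠ Sp.y) : False :=
  hab.elim h₁ h₂

/-- The span shape as an object of `Cat`. -/
def spCat : Cat.{u, u} := Cat.of Sp.{u}

section Construction

variable (Y Z X : Cat.{u, u}) (f : Y ⟶ Z) (g : Y ⟶ X)

/-- The span diagram `Z ⟵ Y ⟶ X` as a functor to `Cat`. -/
def spanD : Sp.{u} ⥤ Cat.{u, u} where
  obj s :=
    match s with
    | .x => X
    | .y => Y
    | .z => Z
  map {a b} h :=
    match a, b, h with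
    | .x, .x, _ => 𝟙 X
    | .y, .y, _ => 𝟙 Y
    | .z, .z, _ => 𝟙 Z
    | .y, .x, _ => g
    | .y, .z, _ => f
    | .x, .y, h => absurd h.down.down (by rintro (h | h) <;> exact Sp.noConfusion h)
    | .x, .z, h => absurd h.down.down (by rintro (h | h) <;> exact Sp.noConfusion h)
    | .z, .x, h => absurd h.down.down (by rintro (h | h) <;> exact Sp.noConfusion h)
    | .z, .y, h => absurd h.down.down (by rintro (h | h) <;> exact Sp.noConfusion h)
  map_id a := by cases a <;> rfl
  map_comp {a b c} h₁ h₂ := by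
    cases a <;> cases b <;> cases c <;>
      first
        | rfl
        | (rcases h₁.down.down with h | h <;> exact Sp.noConfusion h)
        | (rcases h₂.down.down with h | h <;> exact Sp.noConfusion h)

attribute [reducible] spanD

@[simp] theorem spanD_map_xx (h : (Sp.x : Sp.{u}) ⟶ Sp.x) : (spanD Y Z X f g).map h = 𝟙 X := rfl
@[simp] theorem spanD_map_yy (h : (Sp.y : Sp.{u}) ⟶ Sp.y) : (spanD Y Z X f g).map h = 𝟙 Y := rfl
@[simp] theorem spanD_map_zz (h : (Sp.z : Sp.{u}) ⟶ Sp.z) : (spanD Y Z X f g).map h = 𝟙 Z := rfl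
@[simp] theorem spanD_map_yx (h : (Sp.y : Sp.{u}) ⟶ Sp.x) : (spanD Y Z X f g).map h = g := rfl
@[simp] theorem spanD_map_yz (h : (Sp.y : Sp.{u}) ⟶ Sp.z) : (spanD Y Z X f g).map h = f := rfl

/-- The Grothendieck construction of the span diagram. -/
noncomputable def PCat : Cat.{u, u} := Cat.of (Grothendieck (spanD Y Z X f g))

/-- The projection to the base. -/
noncomputable def piHom : PCat Y Z X f g ⟶ spCat.{u} := (Grothendieck.forget (spanD Y Z X f g)).toCatHom


/-! ### The subcategory `M` on the fibers over `x` and `y` -/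

/-- The walking-arrow-indexed diagram `Y ⟶ X` given by `g`. -/
noncomputable def span2D : Two.{u} ⥤ Cat.{u, u} where
  obj t :=
    match t with
    | ⟨false⟩ => Y
    | ⟨true⟩ => X
  map {a b} h :=
    match a, b, h with
    | ⟨false⟩, ⟨false⟩, _ => 𝟙 Y
    | ⟨false⟩, ⟨true⟩, _ => g
    | ⟨true⟩, ⟨true⟩, _ => 𝟙 X
    | ⟨true⟩, ⟨false⟩, h => (Two.not_le.{u} h.down.down).elim
  map_id a := by rcases a with ⟨_ | _⟩ <;> rfl
  map_comp {a b c} h₁ h₂ := by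
    rcases a with ⟨_ | _⟩ <;> rcases b with ⟨_ | _⟩ <;> rcases c with ⟨_ | _⟩ <;>
      first
        | rfl
        | exact (Two.not_le.{u} h₁.down.down).elim
        | exact (Two.not_le.{u} h₂.down.down).elim

attribute [reducible] span2D

@[simp] theorem span2D_map_ff (h : (⟨false⟩ : Two.{u}) ⟶ ⟨false⟩) :
    (span2D Y X g).map h = 𝟙 Y := rfl
@[simp] theorem span2D_map_ft (h : (⟨false⟩ : Two.{u}) ⟶ ⟨true⟩) :
    (span2D Y X g).map h = g := rfl
@[simp] theorem span2D_map_tt (h : (⟨true⟩ : Two.{u}) ⟶ ⟨true⟩) :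
    (span2D Y X g).map h = 𝟙 X := rfl

/-- The category `M`. -/
noncomputable def MCat : Cat.{u, u} := Cat.of (Grothendieck (span2D Y X g))

/-- The inclusion of `M` into `P`. -/
noncomputable def jM : Grothendieck (span2D Y X g) ⥤ Grothendieck (spanD Y Z X f g) where
  obj p :=
    match p with
    | ⟨⟨false⟩, a⟩ => ⟨Sp.y, a⟩
    | ⟨⟨true⟩, a⟩ => ⟨Sp.x, a⟩
  map {p q} φ :=
    match p, q, φ with
    | ⟨⟨false⟩, _⟩, ⟨⟨false⟩, _⟩, φ => ⟨homOfLE (Or.inl rfl), φ.fiber⟩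
    | ⟨⟨false⟩, _⟩, ⟨⟨true⟩, _⟩, φ => ⟨homOfLE (Or.inr rfl), φ.fiber⟩
    | ⟨⟨true⟩, _⟩, ⟨⟨true⟩, _⟩, φ => ⟨homOfLE (Or.inl rfl), φ.fiber⟩
    | ⟨⟨true⟩, _⟩, ⟨⟨false⟩, _⟩, φ => (Two.not_le.{u} φ.base.down.down).elim
  map_id p := by
    rcases p with ⟨⟨_ | _⟩, a⟩ <;>
      exact Grothendieck.ext _ _ (Subsingleton.elim _ _) (by simp)
  map_comp {p q r} φ ψ := by
    rcases p with ⟨⟨_ | _⟩, a⟩ <;> rcases q with ⟨⟨_ | _⟩, b⟩ <;> rcases r with ⟨⟨_ | _⟩, c⟩ <;>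
      first
        | exact (Two.not_le.{u} φ.base.down.down).elim
        | exact (Two.not_le.{u} ψ.base.down.down).elim
        | exact Grothendieck.ext _ _ (Subsingleton.elim _ _) (by simp)

/-- The inclusion of `X` into `M`. -/
noncomputable def iXM : ↥X ⥤ Grothendieck (span2D Y X g) where
  obj x₀ := ⟨⟨true⟩, x₀⟩
  map φ := ⟨homOfLE (le_refl _), φ⟩
  map_id x₀ := Grothendieck.ext _ _ (Subsingleton.elim _ _) (by simp)
  map_comp φ ψ := Grothendieck.ext _ _ (Subsingleton.elim _ _) (by simp)

/-- The retraction of `M` onto `X`. -/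
noncomputable def rM : Grothendieck (span2D Y X g) ⥤ ↥X where
  obj p :=
    match p with
    | ⟨⟨false⟩, a⟩ => g.toFunctor.obj a
    | ⟨⟨true⟩, a⟩ => a
  map {p q} φ :=
    match p, q, φ with
    | ⟨⟨false⟩, _⟩, ⟨⟨false⟩, _⟩, φ => g.toFunctor.map φ.fiber
    | ⟨⟨false⟩, _⟩, ⟨⟨true⟩, _⟩, φ => φ.fiber
    | ⟨⟨true⟩, _⟩, ⟨⟨true⟩, _⟩, φ => φ.fiber
    | ⟨⟨true⟩, _⟩, ⟨⟨false⟩, _⟩, φ => (Two.not_le.{u} φ.base.down.down).elim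
  map_id p := by
    rcases p with ⟨⟨_ | _⟩, a⟩ <;> simp
  map_comp {p q r} φ ψ := by
    rcases p with ⟨⟨_ | _⟩, a⟩ <;> rcases q with ⟨⟨_ | _⟩, b⟩ <;> rcases r with ⟨⟨_ | _⟩, c⟩ <;>
      first
        | exact (Two.not_le.{u} φ.base.down.down).elim
        | exact (Two.not_le.{u} ψ.base.down.down).elim
        | simp

@[simp] theorem rM_map_ff {a b : ↥Y}
    (φ : (⟨⟨false⟩, a⟩ : Grothendieck (span2D Y X g)) ⟶ ⟨⟨false⟩, b⟩) :
    (rM Y X g).map φ = g.toFunctor.map φ.fiber := rfl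
@[simp] theorem rM_map_ft {a : ↥Y} {b : ↥X}
    (φ : (⟨⟨false⟩, a⟩ : Grothendieck (span2D Y X g)) ⟶ ⟨⟨true⟩, b⟩) :
    (rM Y X g).map φ = φ.fiber := rfl
@[simp] theorem rM_map_tt {a b : ↥X}
    (φ : (⟨⟨true⟩, a⟩ : Grothendieck (span2D Y X g)) ⟶ ⟨⟨true⟩, b⟩) :
    (rM Y X g).map φ = φ.fiber := rfl
@[simp] theorem iXM_map_fiber {a b : ↥X} (χ : a ⟶ b) :
    ((iXM Y X g).map χ).fiber = χ := rfl

/-- The retraction is left adjoint to the inclusion of `X`. -/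
noncomputable def adjMX : rM Y X g ⊣ iXM Y X g :=
  Adjunction.mkOfHomEquiv
    { homEquiv := fun p x₀ =>
        match p with
        | ⟨⟨false⟩, a⟩ =>
          { toFun := fun ψ => ⟨homOfLE (by exact Bool.false_le _), ψ⟩
            invFun := fun φ => φ.fiber
            left_inv := fun ψ => rfl
            right_inv := fun φ => Grothendieck.ext _ _ (Subsingleton.elim _ _) (by simp; exact eqToHom_self_comp _ _) }
        | ⟨⟨true⟩, a⟩ =>
          { toFun := fun ψ => ⟨homOfLE (le_refl _), ψ⟩
            invFun := fun φ => φ.fiber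
            left_inv := fun ψ => rfl
            right_inv := fun φ => Grothendieck.ext _ _ (Subsingleton.elim _ _) (by simp; exact eqToHom_self_comp _ _) }
      homEquiv_naturality_left_symm := by
        intro p' p x₀ φ χ
        rcases p' with ⟨⟨_ | _⟩, a⟩ <;> rcases p with ⟨⟨_ | _⟩, b⟩ <;>
          first
            | exact (Two.not_le.{u} φ.base.down.down).elim
            | (change (φ ≫ χ).fiber = (rM Y X g).map φ ≫ χ.fiber
               exact eqToHom_self_comp _ _)
      homEquiv_naturality_right := by
        intro p x₀ x₁ ψ χ
        rcases p with ⟨⟨_ | _⟩, a⟩ <;>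
          exact Grothendieck.ext _ _ (Subsingleton.elim _ _) (by simp [iXM]; exact eqToHom_self_comp _ _) }

@[simp] theorem jM_map_ff {a b : ↥Y}
    (φ : (⟨⟨false⟩, a⟩ : Grothendieck (span2D Y X g)) ⟶ ⟨⟨false⟩, b⟩) :
    (jM Y Z X f g).map φ = ⟨homOfLE (Or.inl rfl), φ.fiber⟩ := rfl
@[simp] theorem jM_map_ft {a : ↥Y} {b : ↥X}
    (φ : (⟨⟨false⟩, a⟩ : Grothendieck (span2D Y X g)) ⟶ ⟨⟨true⟩, b⟩) :
    (jM Y Z X f g).map φ = ⟨homOfLE (Or.inr rfl), φ.fiber⟩ := rfl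
@[simp] theorem jM_map_tt {a b : ↥X}
    (φ : (⟨⟨true⟩, a⟩ : Grothendieck (span2D Y X g)) ⟶ ⟨⟨true⟩, b⟩) :
    (jM Y Z X f g).map φ = ⟨homOfLE (Or.inl rfl), φ.fiber⟩ := rfl

/-- Everything as morphisms of `Cat`. -/
noncomputable def jMHom : MCat Y X g ⟶ PCat Y Z X f g := (jM Y Z X f g).toCatHom

noncomputable def iXMHom : X ⟶ MCat Y X g := (iXM Y X g).toCatHom

noncomputable def rMHom : MCat Y X g ⟶ X := (rM Y X g).toCatHom

/-- The inclusion of the fiber `Y` into `P`. -/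
noncomputable def iYP : ↥Y ⥤ Grothendieck (spanD Y Z X f g) where
  obj y₀ := ⟨Sp.y, y₀⟩
  map φ := ⟨homOfLE (le_refl _), φ⟩
  map_id y₀ := Grothendieck.ext _ _ (Subsingleton.elim _ _) (by simp)
  map_comp φ ψ := Grothendieck.ext _ _ (Subsingleton.elim _ _) (by simp)

/-- The inclusion of the fiber `Z` into `P`. -/
noncomputable def iZP : ↥Z ⥤ Grothendieck (spanD Y Z X f g) where
  obj z₀ := ⟨Sp.z, z₀⟩
  map φ := ⟨homOfLE (le_refl _), φ⟩
  map_id z₀ := Grothendieck.ext _ _ (Subsingleton.elim _ _) (by simp)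
  map_comp φ ψ := Grothendieck.ext _ _ (Subsingleton.elim _ _) (by simp)

@[simp] theorem iYP_map {a b : ↥Y} (φ : a ⟶ b) :
    (iYP Y Z X f g).map φ = ⟨homOfLE (le_refl _), φ⟩ := rfl
@[simp] theorem iZP_map {a b : ↥Z} (φ : a ⟶ b) :
    (iZP Y Z X f g).map φ = ⟨homOfLE (le_refl _), φ⟩ := rfl
@[simp] theorem iXM_map {a b : ↥X} (φ : a ⟶ b) :
    (iXM Y X g).map φ = ⟨homOfLE (le_refl _), φ⟩ := rfl

noncomputable def iYPHom : Y ⟶ PCat Y Z X f g := (iYP Y Z X f g).toCatHom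

noncomputable def iZPHom : Z ⟶ PCat Y Z X f g := (iZP Y Z X f g).toCatHom

/-- The functor `F : X ⟶ P`. -/
noncomputable def FHom : X ⟶ PCat Y Z X f g := iXMHom Y X g ≫ jMHom Y Z X f g

/-- The natural transformation `i_Y ⟶ g ≫ F`. -/
noncomputable def sigmaNat :
    (iYP Y Z X f g) ⟶ (g.toFunctor ⋙ (iXM Y X g ⋙ jM Y Z X f g)) where
  app y₀ := ⟨homOfLE (Or.inr rfl), 𝟙 (g.toFunctor.obj y₀)⟩
  naturality a b φ := Grothendieck.ext _ _ (Subsingleton.elim _ _)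
    (by simp [iYP, iXM, jM]; exact eqToHom_self_comp _ _)

/-- The natural transformation `i_Y ⟶ f ≫ i_Z`. -/
noncomputable def tauNat :
    (iYP Y Z X f g) ⟶ (f.toFunctor ⋙ iZP Y Z X f g) where
  app y₀ := ⟨homOfLE (Or.inr rfl), 𝟙 (f.toFunctor.obj y₀)⟩
  naturality a b φ := Grothendieck.ext _ _ (Subsingleton.elim _ _)
    (by simp [iYP, iZP]; exact eqToHom_self_comp _ _)

/-! ### `W` contains the inclusion of `X` into `M` -/

theorem W_iXMHom (hW : IsBasicLocalizer W) : W (iXMHom Y X g) := by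
  have hr : W (rMHom Y X g) := W_of_leftAdjoint hW (adjMX Y X g)
  have hri : W (rMHom Y X g ≫ iXMHom Y X g) := by
    refine (W_natTrans hW (a := 𝟙 (MCat Y X g)) (b := rMHom Y X g ≫ iXMHom Y X g)
      ((adjMX Y X g).unit) ).mp ?_
    exact hW.weaklySaturated.id_mem _
  exact hW.weaklySaturated.of_comp_left _ _ hr hri

/-! ### Full and faithful properties of `jM` and the induced comma functors -/

instance jM_faithful : (jM Y Z X f g).Faithful where
  map_injective {p q} {φ ψ} h := by
    have hc := Grothendieck.congr h
    rcases p with ⟨⟨_ | _⟩, a⟩ <;> rcases q with ⟨⟨_ | _⟩, b⟩ <;>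
      first
        | exact (Two.not_le.{u} φ.base.down.down).elim
        | (refine Grothendieck.ext _ _ (Subsingleton.elim _ _) ?_
           simp at hc ⊢
           exact hc.trans (eqToHom_self_comp _ _))

instance jM_full : (jM Y Z X f g).Full where
  map_surjective {p q} ν := by
    rcases p with ⟨⟨_ | _⟩, a⟩ <;> rcases q with ⟨⟨_ | _⟩, b⟩
    · exact ⟨⟨homOfLE (le_refl _), ν.fiber⟩,
        Grothendieck.ext _ _ (Subsingleton.elim _ _) (by simp; exact eqToHom_self_comp _ _)⟩
    · exact ⟨⟨homOfLE (by exact Bool.false_le _), ν.fiber⟩,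
        Grothendieck.ext _ _ (Subsingleton.elim _ _) (by simp; exact eqToHom_self_comp _ _)⟩
    · exact absurd ν.base.down.down (by rintro (e | e) <;> exact Sp.noConfusion e)
    · exact ⟨⟨homOfLE (le_refl _), ν.fiber⟩,
        Grothendieck.ext _ _ (Subsingleton.elim _ _) (by simp; exact eqToHom_self_comp _ _)⟩

end Construction

section PreLeft

variable {A B : Type u} [Category.{u} A] [Category.{u} B] {S : Type u} [Preorder S]
variable (F : A ⥤ B) (L : B ⥤ S) (k : S)

@[simp] theorem preLeft_map_left {c c' : Comma (F ⋙ L) (Functor.fromPUnit.{u} k)}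
    (φ : c ⟶ c') :
    ((Comma.preLeft F L (Functor.fromPUnit.{u} k)).map φ).left = F.map φ.left := rfl

instance preLeft_faithful [F.Faithful] :
    (Comma.preLeft F L (Functor.fromPUnit.{u} k)).Faithful where
  map_injective {c c'} {φ ψ} h := by
    apply CommaMorphism.ext
    · exact F.map_injective (congrArg CommaMorphism.left h)
    · exact Subsingleton.elim _ _

instance preLeft_full [F.Full] :
    (Comma.preLeft F L (Functor.fromPUnit.{u} k)).Full where
  map_surjective {c c'} ν :=
    ⟨⟨F.preimage ν.left, ν.right, Subsingleton.elim _ _⟩, by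
      apply CommaMorphism.ext
      · simp
      · exact Subsingleton.elim _ _⟩

end PreLeft

section Construction2

variable (Y Z X : Cat.{u, u}) (f : Y ⟶ Z) (g : Y ⟶ X)

theorem spNe (a : Sp.{u}) (b : Sp.{u}) (hne : a ≠ b) (hny : a ≠ Sp.y) (h : a ⟶ b) : False :=
  Sp.notLE h.down.down hne hny

instance essSurj_x :
    (Comma.preLeft (jM Y Z X f g) (Grothendieck.forget (spanD Y Z X f g))
      (Functor.fromPUnit.{u} Sp.x)).EssSurj where
  mem_essImage c := by
    obtain ⟨⟨base, fib⟩, r, h⟩ := c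
    cases base with
    | z => exact (spNe Sp.z Sp.x (by rintro ⟨⟩) (by rintro ⟨⟩) h).elim
    | x => exact ⟨⟨⟨⟨true⟩, fib⟩, r, h⟩, ⟨Iso.refl _⟩⟩
    | y => exact ⟨⟨⟨⟨false⟩, fib⟩, r, h⟩, ⟨Iso.refl _⟩⟩

instance essSurj_y :
    (Comma.preLeft (jM Y Z X f g) (Grothendieck.forget (spanD Y Z X f g))
      (Functor.fromPUnit.{u} Sp.y)).EssSurj where
  mem_essImage c := by
    obtain ⟨⟨base, fib⟩, r, h⟩ := c
    cases base with
    | z => exact (spNe Sp.z Sp.y (by rintro ⟨⟩) (by rintro ⟨⟩) h).elim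
    | x => exact (spNe Sp.x Sp.y (by rintro ⟨⟩) (by rintro ⟨⟩) h).elim
    | y => exact ⟨⟨⟨⟨false⟩, fib⟩, r, h⟩, ⟨Iso.refl _⟩⟩

/-! ### The comma categories over `z` -/

/-- `Y` is equivalent to the comma category of `jM ⋙ forget` over `z`. -/
noncomputable def aY :
    ↥Y ⥤ Comma (jM Y Z X f g ⋙ Grothendieck.forget (spanD Y Z X f g))
      (Functor.fromPUnit.{u} Sp.z) where
  obj y₀ := ⟨⟨⟨false⟩, y₀⟩, ⟨⟨⟩⟩, homOfLE (Or.inr rfl)⟩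
  map φ := ⟨⟨homOfLE (le_refl _), φ⟩, 𝟙 _, Subsingleton.elim _ _⟩
  map_id y₀ := by
    apply CommaMorphism.ext
    · exact Grothendieck.ext _ _ (Subsingleton.elim _ _) (by simp)
    · exact Subsingleton.elim _ _
  map_comp φ ψ := by
    apply CommaMorphism.ext
    · exact Grothendieck.ext _ _ (Subsingleton.elim _ _) (by simp)
    · exact Subsingleton.elim _ _

@[simp] theorem aY_map_left {a b : ↥Y} (φ : a ⟶ b) :
    ((aY Y Z X f g).map φ).left = ⟨homOfLE (le_refl _), φ⟩ := rfl

instance aY_faithful : (aY Y Z X f g).Faithful where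
  map_injective {a b} {φ ψ} h := by
    have hc := Grothendieck.congr (congrArg CommaMorphism.left h)
    simp at hc
    exact hc.trans (eqToHom_self_comp _ _)

instance aY_full : (aY Y Z X f g).Full where
  map_surjective {a b} ν := by
    refine ⟨ν.left.fiber, ?_⟩
    apply CommaMorphism.ext
    · exact Grothendieck.ext _ _ (Subsingleton.elim _ _) (by simp; exact eqToHom_self_comp _ _)
    · exact Subsingleton.elim _ _

instance aY_essSurj : (aY Y Z X f g).EssSurj where
  mem_essImage c := by
    obtain ⟨⟨⟨_ | _⟩, fib⟩, r, h⟩ := c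
    · exact ⟨fib, ⟨Comma.isoMk (Iso.refl _) (eqToIso (Subsingleton.elim _ _))
        (Subsingleton.elim _ _)⟩⟩
    · exact (spNe Sp.x Sp.z (by rintro ⟨⟩) (by rintro ⟨⟩) h).elim

/-- `Z` maps into the comma category of `forget` over `z`. -/
noncomputable def bZ :
    ↥Z ⥤ Comma (Grothendieck.forget (spanD Y Z X f g)) (Functor.fromPUnit.{u} Sp.z) where
  obj z₀ := ⟨⟨Sp.z, z₀⟩, ⟨⟨⟩⟩, homOfLE (le_refl _)⟩
  map φ := ⟨⟨homOfLE (le_refl _), φ⟩, 𝟙 _, Subsingleton.elim _ _⟩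
  map_id z₀ := by
    apply CommaMorphism.ext
    · exact Grothendieck.ext _ _ (Subsingleton.elim _ _) (by simp)
    · exact Subsingleton.elim _ _
  map_comp φ ψ := by
    apply CommaMorphism.ext
    · exact Grothendieck.ext _ _ (Subsingleton.elim _ _) (by simp)
    · exact Subsingleton.elim _ _

@[simp] theorem bZ_map_left {a b : ↥Z} (φ : a ⟶ b) :
    ((bZ Y Z X f g).map φ).left = ⟨homOfLE (le_refl _), φ⟩ := rfl

/-- The left adjoint of `bZ`. -/
noncomputable def rhoZ :
    Comma (Grothendieck.forget (spanD Y Z X f g)) (Functor.fromPUnit.{u} Sp.z) ⥤ ↥Z where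
  obj c :=
    match c with
    | ⟨⟨Sp.y, a⟩, _, _⟩ => f.toFunctor.obj a
    | ⟨⟨Sp.z, a⟩, _, _⟩ => a
    | ⟨⟨Sp.x, _⟩, _, h⟩ => ((spNe Sp.x Sp.z (by rintro ⟨⟩) (by rintro ⟨⟩) h)).elim
  map {c c'} φ :=
    match c, c', φ with
    | ⟨⟨Sp.y, _⟩, _, _⟩, ⟨⟨Sp.y, _⟩, _, _⟩, φ => f.toFunctor.map φ.left.fiber
    | ⟨⟨Sp.y, _⟩, _, _⟩, ⟨⟨Sp.z, _⟩, _, _⟩, φ => φ.left.fiber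
    | ⟨⟨Sp.z, _⟩, _, _⟩, ⟨⟨Sp.z, _⟩, _, _⟩, φ => φ.left.fiber
    | ⟨⟨Sp.z, _⟩, _, _⟩, ⟨⟨Sp.y, _⟩, _, _⟩, φ =>
        ((spNe Sp.z Sp.y (by rintro ⟨⟩) (by rintro ⟨⟩) φ.left.base)).elim
    | ⟨⟨Sp.x, _⟩, _, h⟩, _, _ => ((spNe Sp.x Sp.z (by rintro ⟨⟩) (by rintro ⟨⟩) h)).elim
    | _, ⟨⟨Sp.x, _⟩, _, h⟩, _ => ((spNe Sp.x Sp.z (by rintro ⟨⟩) (by rintro ⟨⟩) h)).elim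
  map_id c := by
    obtain ⟨⟨base, a⟩, r, h⟩ := c
    cases base with
    | x => exact ((spNe Sp.x Sp.z (by rintro ⟨⟩) (by rintro ⟨⟩) h)).elim
    | y => simp
    | z => simp
  map_comp {c c' c''} φ ψ := by
    obtain ⟨⟨bc, a⟩, rc, hc⟩ := c
    obtain ⟨⟨bc', a'⟩, rc', hc'⟩ := c'
    obtain ⟨⟨bc'', a''⟩, rc'', hc''⟩ := c''
    cases bc <;> cases bc' <;> cases bc'' <;>
      first
        | exact ((spNe Sp.x Sp.z (by rintro ⟨⟩) (by rintro ⟨⟩) hc)).elim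
        | exact ((spNe Sp.x Sp.z (by rintro ⟨⟩) (by rintro ⟨⟩) hc')).elim
        | exact ((spNe Sp.x Sp.z (by rintro ⟨⟩) (by rintro ⟨⟩) hc'')).elim
        | exact ((spNe Sp.z Sp.y (by rintro ⟨⟩) (by rintro ⟨⟩) φ.left.base)).elim
        | exact ((spNe Sp.z Sp.y (by rintro ⟨⟩) (by rintro ⟨⟩) ψ.left.base)).elim
        | simp

@[simp] theorem rhoZ_map_yy {a a' : ↥Y} {r r' : Discrete PUnit.{u + 1}}
    {h : (Grothendieck.forget (spanD Y Z X f g)).obj ⟨Sp.y, a⟩ ⟶ (Functor.fromPUnit.{u} Sp.z).obj r}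
    {h' : (Grothendieck.forget (spanD Y Z X f g)).obj ⟨Sp.y, a'⟩ ⟶ (Functor.fromPUnit.{u} Sp.z).obj r'}
    (φ : (⟨⟨Sp.y, a⟩, r, h⟩ : Comma (Grothendieck.forget (spanD Y Z X f g))
      (Functor.fromPUnit.{u} Sp.z)) ⟶ ⟨⟨Sp.y, a'⟩, r', h'⟩) :
    (rhoZ Y Z X f g).map φ = f.toFunctor.map φ.left.fiber := rfl

@[simp] theorem rhoZ_map_yz {a : ↥Y} {a' : ↥Z} {r r' : Discrete PUnit.{u + 1}}
    {h : (Grothendieck.forget (spanD Y Z X f g)).obj ⟨Sp.y, a⟩ ⟶ (Functor.fromPUnit.{u} Sp.z).obj r}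
    {h' : (Grothendieck.forget (spanD Y Z X f g)).obj ⟨Sp.z, a'⟩ ⟶ (Functor.fromPUnit.{u} Sp.z).obj r'}
    (φ : (⟨⟨Sp.y, a⟩, r, h⟩ : Comma (Grothendieck.forget (spanD Y Z X f g))
      (Functor.fromPUnit.{u} Sp.z)) ⟶ ⟨⟨Sp.z, a'⟩, r', h'⟩) :
    (rhoZ Y Z X f g).map φ = φ.left.fiber := rfl

@[simp] theorem rhoZ_map_zz {a a' : ↥Z} {r r' : Discrete PUnit.{u + 1}}
    {h : (Grothendieck.forget (spanD Y Z X f g)).obj ⟨Sp.z, a⟩ ⟶ (Functor.fromPUnit.{u} Sp.z).obj r}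
    {h' : (Grothendieck.forget (spanD Y Z X f g)).obj ⟨Sp.z, a'⟩ ⟶ (Functor.fromPUnit.{u} Sp.z).obj r'}
    (φ : (⟨⟨Sp.z, a⟩, r, h⟩ : Comma (Grothendieck.forget (spanD Y Z X f g))
      (Functor.fromPUnit.{u} Sp.z)) ⟶ ⟨⟨Sp.z, a'⟩, r', h'⟩) :
    (rhoZ Y Z X f g).map φ = φ.left.fiber := rfl

/-- `rhoZ` is left adjoint to `bZ`. -/
noncomputable def adjZ : rhoZ Y Z X f g ⊣ bZ Y Z X f g :=
  Adjunction.mkOfHomEquiv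
    { homEquiv := fun c z₀ =>
        match c with
        | ⟨⟨Sp.y, a⟩, r, h⟩ =>
          { toFun := fun ψ => ⟨⟨homOfLE (Or.inr rfl), ψ⟩, eqToHom (Subsingleton.elim _ _),
              Subsingleton.elim _ _⟩
            invFun := fun φ => φ.left.fiber
            left_inv := fun ψ => rfl
            right_inv := fun φ => by
              apply CommaMorphism.ext
              · exact Grothendieck.ext _ _ (Subsingleton.elim _ _) (by simp; exact eqToHom_self_comp _ _)
              · exact Subsingleton.elim _ _ }
        | ⟨⟨Sp.z, a⟩, r, h⟩ =>
          { toFun := fun ψ => ⟨⟨homOfLE (le_refl _), ψ⟩, eqToHom (Subsingleton.elim _ _),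
              Subsingleton.elim _ _⟩
            invFun := fun φ => φ.left.fiber
            left_inv := fun ψ => rfl
            right_inv := fun φ => by
              apply CommaMorphism.ext
              · exact Grothendieck.ext _ _ (Subsingleton.elim _ _) (by simp; exact eqToHom_self_comp _ _)
              · exact Subsingleton.elim _ _ }
        | ⟨⟨Sp.x, a⟩, r, h⟩ => ((spNe Sp.x Sp.z (by rintro ⟨⟩) (by rintro ⟨⟩) h)).elim
      homEquiv_naturality_left_symm := by
        intro c' c z₀ φ χ
        obtain ⟨⟨bc', a'⟩, rc', hc'⟩ := c'
        obtain ⟨⟨bc, a⟩, rc, hc⟩ := c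
        cases bc' <;> cases bc <;>
          first
            | exact ((spNe Sp.x Sp.z (by rintro ⟨⟩) (by rintro ⟨⟩) hc')).elim
            | exact ((spNe Sp.x Sp.z (by rintro ⟨⟩) (by rintro ⟨⟩) hc)).elim
            | exact ((spNe Sp.z Sp.y (by rintro ⟨⟩) (by rintro ⟨⟩) φ.left.base)).elim
            | exact eqToHom_self_comp _ _
      homEquiv_naturality_right := by
        intro c z₀ z₁ ψ χ
        obtain ⟨⟨bc, a⟩, rc, hc⟩ := c
        cases bc <;>
          first
            | exact ((spNe Sp.x Sp.z (by rintro ⟨⟩) (by rintro ⟨⟩) hc)).elim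
            | (apply CommaMorphism.ext
               · exact Grothendieck.ext _ _ (Subsingleton.elim _ _) (by simp; exact (eqToHom_self_comp _ _).symm)
               · exact Subsingleton.elim _ _) }

/-- The comma category of `forget` over `z`, as an object of `Cat`. -/
noncomputable def C2zCat : Cat.{u, u} :=
  Cat.of (Comma (Grothendieck.forget (spanD Y Z X f g)) (Functor.fromPUnit.{u} Sp.z))

/-- The comma category of `jM ⋙ forget` over `z`, as an object of `Cat`. -/
noncomputable def C1zCat : Cat.{u, u} :=
  Cat.of (Comma (jM Y Z X f g ⋙ Grothendieck.forget (spanD Y Z X f g))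
    (Functor.fromPUnit.{u} Sp.z))

noncomputable def bZHom : Z ⟶ C2zCat Y Z X f g := (bZ Y Z X f g).toCatHom

noncomputable def rhoZHom : C2zCat Y Z X f g ⟶ Z := (rhoZ Y Z X f g).toCatHom

theorem W_bZHom (hW : IsBasicLocalizer W) : W (bZHom Y Z X f g) := by
  have hρ : W (rhoZHom Y Z X f g) := W_of_leftAdjoint hW (adjZ Y Z X f g)
  have hri : W (rhoZHom Y Z X f g ≫ bZHom Y Z X f g) := by
    refine (W_natTrans hW (a := 𝟙 (C2zCat Y Z X f g))
      (b := rhoZHom Y Z X f g ≫ bZHom Y Z X f g) ((adjZ Y Z X f g).unit)).mp ?_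
    exact hW.weaklySaturated.id_mem _
  exact hW.weaklySaturated.of_comp_left _ _ hρ hri

/-- The homotopy comparing the two composites into the comma category over `z`. -/
noncomputable def thetaNat :
    (aY Y Z X f g ⋙ Comma.preLeft (jM Y Z X f g) (Grothendieck.forget (spanD Y Z X f g))
        (Functor.fromPUnit.{u} Sp.z)) ⟶
      (f.toFunctor ⋙ bZ Y Z X f g) where
  app y₀ := ⟨⟨homOfLE (Or.inr rfl), 𝟙 (f.toFunctor.obj y₀)⟩, eqToHom (Subsingleton.elim _ _),
    Subsingleton.elim _ _⟩
  naturality a b φ := by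
    apply CommaMorphism.ext
    · exact Grothendieck.ext _ _ (Subsingleton.elim _ _)
        (by simp [aY, bZ, Comma.preLeft, jM]
            refine (eqToHom_self_comp _ _).trans ?_
            exact (Category.comp_id (f.toFunctor.map φ)).trans (Category.id_comp _).symm)
    · exact Subsingleton.elim _ _

noncomputable def aYHom : Y ⟶ C1zCat Y Z X f g := (aY Y Z X f g).toCatHom

noncomputable def preLeftZHom : C1zCat Y Z X f g ⟶ C2zCat Y Z X f g :=
  (Comma.preLeft (jM Y Z X f g) (Grothendieck.forget (spanD Y Z X f g))
    (Functor.fromPUnit.{u} Sp.z)).toCatHom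

theorem W_preLeftZ (hW : IsBasicLocalizer W) (hf : W f) : W (preLeftZHom Y Z X f g) := by
  haveI : (aY Y Z X f g).IsEquivalence := {}
  have haY : W (aYHom Y Z X f g) := @W_of_isEquivalence W hW Y (C1zCat Y Z X f g) (aY Y Z X f g) this
  have hfb : W (f ≫ bZHom Y Z X f g) :=
    hW.weaklySaturated.comp_mem _ _ hf (W_bZHom Y Z X f g hW)
  have hθ : W (aYHom Y Z X f g ≫ preLeftZHom Y Z X f g) ↔ W (f ≫ bZHom Y Z X f g) :=
    W_natTrans hW (thetaNat Y Z X f g)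
  exact hW.weaklySaturated.of_comp_left _ _ haY (hθ.mpr hfb)

theorem W_jMHom (hW : IsBasicLocalizer W) (hf : W f) : W (jMHom Y Z X f g) := by
  refine hW.locality (I := MCat Y X g) (J := PCat Y Z X f g) (K := spCat.{u})
    (jM Y Z X f g).toCatHom (Grothendieck.forget (spanD Y Z X f g)).toCatHom (fun k => ?_)
  cases k with
  | x =>
    haveI : (Comma.preLeft (jM Y Z X f g) (Grothendieck.forget (spanD Y Z X f g))
        (Functor.fromPUnit.{u} Sp.x)).IsEquivalence := {}
    exact @W_of_isEquivalence W hW (Cat.of _) (Cat.of _)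
      (Comma.preLeft (jM Y Z X f g) (Grothendieck.forget (spanD Y Z X f g))
        (Functor.fromPUnit.{u} Sp.x)) this
  | y =>
    haveI : (Comma.preLeft (jM Y Z X f g) (Grothendieck.forget (spanD Y Z X f g))
        (Functor.fromPUnit.{u} Sp.y)).IsEquivalence := {}
    exact @W_of_isEquivalence W hW (Cat.of _) (Cat.of _)
      (Comma.preLeft (jM Y Z X f g) (Grothendieck.forget (spanD Y Z X f g))
        (Functor.fromPUnit.{u} Sp.y)) this
  | z => exact W_preLeftZ Y Z X f g hW hf

theorem W_FHom (hW : IsBasicLocalizer W) (hf : W f) : W (FHom Y Z X f g) :=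
  hW.weaklySaturated.comp_mem _ _ (W_iXMHom Y X g hW) (W_jMHom Y Z X f g hW hf)

end Construction2

end LocalizerAux

theorem IsBasicLocalizer.leftCalculus {W : MorphismProperty Cat.{u, u}}
    (hW : IsBasicLocalizer W) {Y Z X : Cat.{u, u}}
    (f : Y ⟶ Z) (hf : W f) (g : Y ⟶ X) :
    ∃ (P : Cat.{u, u}) (F : X ⟶ P) (G : Z ⟶ P),
      W F ∧ NatConnected (g ≫ F) (f ≫ G) := by
  refine ⟨LocalizerAux.PCat Y Z X f g, LocalizerAux.FHom Y Z X f g,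
    LocalizerAux.iZPHom Y Z X f g, LocalizerAux.W_FHom Y Z X f g hW hf, ?_⟩
  exact Relation.EqvGen.trans _ (LocalizerAux.iYPHom Y Z X f g).toFunctor _
    (Relation.EqvGen.symm _ _
      (Relation.EqvGen.rel _ _ ⟨LocalizerAux.sigmaNat Y Z X f g⟩))
    (Relation.EqvGen.rel _ _ ⟨LocalizerAux.tauNat Y Z X f g⟩)
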